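/- Let g be an admissible Lie superalgebra (g₀ k-flat, g₁ k-free, [v,v] 2-divisible for all odd v), J = U(g₀), and let V = g₁ carry the right J-module structure extending the right adjoint action v◁u = [v,u]. Then: (a) [u◁a₍₁₎, v◁a₍₂₎] = S(a₍₁₎)[u,v]a₍₂₎ in J, (b) [u,v] = [v,u], (c) v◁[v,v] = 0, and these imply (d) u◁[v,w] + v◁[w,u] + w◁[u,v] = 0 for all u,v,w ∈ V, a ∈ J. -/
import Mathlib


open TensorProduct

section Stmt10Aux

variable {k L V J : Type*} [CommRing k]
    [LieRing L] [LieAlgebra k L]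
    [AddCommGroup V] [Module k V]
    [Ring J] [HopfAlgebra k J]

/-- The map `p ⊗ q ↦ ι [u ◁ p, v ◁ q]`. -/
private noncomputable def stmt10LM (b : V →ₗ[k] V →ₗ[k] L) (ι : L →ₗ[k] J)
    (act : V →ₗ[k] J →ₗ[k] V) (u v : V) : J ⊗[k] J →ₗ[k] J :=
  ι ∘ₗ TensorProduct.lift b ∘ₗ TensorProduct.map (act u) (act v)

private lemma stmt10LM_tmul (b : V →ₗ[k] V →ₗ[k] L) (ι : L →ₗ[k] J)
    (act : V →ₗ[k] J →ₗ[k] V) (u v : V) (p q : J) :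
    stmt10LM b ι act u v (p ⊗ₜ[k] q) = ι (b (act u p) (act v q)) := by
  simp [stmt10LM]

/-- The pure-tensor multiplication step. -/
private lemma stmt10_pureM (b : V →ₗ[k] V →ₗ[k] L) (ι : L →ₗ[k] J)
    (act : V →ₗ[k] J →ₗ[k] V)
    (hactmul : ∀ (v : V) (x y : J), act v (x * y) = act (act v x) y)
    (u v : V) (p r t : J) (z : J ⊗[k] (J ⊗[k] J)) :
    LinearMap.mul' k J (LinearMap.lTensor J (stmt10LM b ι act u v)
        ((p ⊗ₜ[k] (r ⊗ₜ[k] t)) * z)) =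
      p * LinearMap.mul' k J
        (LinearMap.lTensor J (stmt10LM b ι act (act u r) (act v t)) z) := by
  induction z using TensorProduct.induction_on with
  | zero => simp
  | add z1 z2 h1 h2 => simp only [mul_add, map_add, h1, h2]
  | tmul y1 q =>
    induction q using TensorProduct.induction_on with
    | zero => simp
    | add q1 q2 h1 h2 =>
      simp only [tmul_add, mul_add, map_add, h1, h2]
    | tmul y2 y3 =>
      simp only [Algebra.TensorProduct.tmul_mul_tmul, LinearMap.lTensor_tmul,
        stmt10LM_tmul, LinearMap.mul'_apply, hactmul, mul_assoc]

/-- `lTensor comul` is multiplicative. -/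
private lemma stmt10_T2mul (s t : J ⊗[k] J) :
    LinearMap.lTensor J (Coalgebra.comul (R := k)) (s * t) =
      LinearMap.lTensor J (Coalgebra.comul (R := k)) s *
        LinearMap.lTensor J (Coalgebra.comul (R := k)) t := by
  induction s using TensorProduct.induction_on with
  | zero => simp
  | add s1 s2 h1 h2 => simp only [add_mul, map_add, h1, h2]
  | tmul p q =>
    induction t using TensorProduct.induction_on with
    | zero => simp
    | add t1 t2 h1 h2 => simp only [mul_add, map_add, h1, h2]
    | tmul r w =>
      simp [Algebra.TensorProduct.tmul_mul_tmul]

/-- The key `S`-free identity: `Σ a₍₁₎ · ι [u ◁ a₍₂₎, v ◁ a₍₃₎] = ι [u, v] · a`. -/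
private lemma stmt10_key (b : V →ₗ[k] V →ₗ[k] L) (aVL : V →ₗ[k] L →ₗ[k] V)
    (hjac011 : ∀ (v w : V) (x : L), ⁅b v w, x⁆ = b (aVL v x) w + b v (aVL w x))
    (ι : L →ₗ[k] J)
    (hιbr : ∀ u w : L, ι ⁅u, w⁆ = ι u * ι w - ι w * ι u)
    (hprim : ∀ u : L, Coalgebra.comul (R := k) (ι u) = ι u ⊗ₜ 1 + 1 ⊗ₜ ι u)
    (hgen : Algebra.adjoin k (Set.range ι) = ⊤)
    (act : V →ₗ[k] J →ₗ[k] V)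
    (hact1 : ∀ v : V, act v 1 = v)
    (hactmul : ∀ (v : V) (x y : J), act v (x * y) = act (act v x) y)
    (hactι : ∀ (v : V) (u : L), act v (ι u) = aVL v u)
    (a : J) :
    ∀ u v : V,
      LinearMap.mul' k J
        ((LinearMap.lTensor J (stmt10LM b ι act u v ∘ₗ Coalgebra.comul))
          (Coalgebra.comul (R := k) a)) = ι (b u v) * a := by
  have ha : a ∈ Algebra.adjoin k (Set.range ι) := hgen ▸ Algebra.mem_top
  induction ha using Algebra.adjoin_induction with
  | mem x hx =>
    obtain ⟨w, rfl⟩ := hx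
    intro u v
    rw [hprim w]
    simp only [map_add, LinearMap.lTensor_tmul, LinearMap.comp_apply,
      Bialgebra.comul_one, Algebra.TensorProduct.one_def, hprim, map_add,
      stmt10LM_tmul, hact1, hactι, LinearMap.mul'_apply, one_mul]
    have h : ι (b (aVL u w) v) + ι (b u (aVL v w)) =
        ι (b u v) * ι w - ι w * ι (b u v) := by
      rw [← map_add, ← hjac011, hιbr]
    rw [h]
    abel
  | algebraMap r =>
    intro u v
    simp only [Algebra.algebraMap_eq_smul_one, map_smul, LinearMap.smul_apply,
      mul_smul_comm, smul_mul_assoc]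
    congr 1
    simp [Bialgebra.comul_one, Algebra.TensorProduct.one_def, stmt10LM_tmul,
      hact1]
  | add x y hx hy ihx ihy =>
    intro u v
    simp only [map_add, mul_add, ihx u v, ihy u v]
  | mul x y hx hy ihx ihy =>
    intro u v
    rw [Bialgebra.comul_mul, LinearMap.lTensor_comp, LinearMap.comp_apply,
      stmt10_T2mul]
    have M : ∀ s : J ⊗[k] (J ⊗[k] J), ∀ u v : V,
        LinearMap.mul' k J (LinearMap.lTensor J (stmt10LM b ι act u v)
            (s * LinearMap.lTensor J (Coalgebra.comul (R := k))
              (Coalgebra.comul (R := k) y))) =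
          LinearMap.mul' k J (LinearMap.lTensor J (stmt10LM b ι act u v) s) * y := by
      intro s
      induction s using TensorProduct.induction_on with
      | zero => intro u v; simp
      | add s1 s2 h1 h2 =>
        intro u v
        simp only [add_mul, map_add, h1 u v, h2 u v]
      | tmul p q =>
        induction q using TensorProduct.induction_on with
        | zero => intro u v; simp
        | add q1 q2 h1 h2 =>
          intro u v
          simp only [tmul_add, add_mul, map_add, h1 u v, h2 u v]
        | tmul r t =>
          intro u v
          rw [stmt10_pureM b ι act hactmul u v p r t,
            ← LinearMap.lTensor_comp_apply, ihy (act u r) (act v t)]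
          simp only [LinearMap.lTensor_tmul, stmt10LM_tmul,
            LinearMap.mul'_apply, mul_assoc]
    rw [M _ u v, ← LinearMap.lTensor_comp_apply, ihx u v, mul_assoc]

end Stmt10Aux

/-- The dual Harish-Chandra pair lemma. -/
theorem stmt10 (k L V J : Type*) [CommRing k]
    [LieRing L] [LieAlgebra k L]
    [AddCommGroup V] [Module k V]
    [Ring J] [HopfAlgebra k J]
    (h2k : ∀ a : k, 2 * a = 0 → a = 0)
    (h2V : ∀ x : V, (2 : k) • x = 0 → x = 0)
    -- odd-odd bracket and right adjoint action of L on V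
    (b : V →ₗ[k] V →ₗ[k] L) (aVL : V →ₗ[k] L →ₗ[k] V)
    -- Lie superalgebra axioms
    (hsym : ∀ u v : V, b u v = b v u)
    (hodd3 : ∀ v : V, aVL v (b v v) = 0)
    (hmod : ∀ (v : V) (x y : L), aVL v ⁅x, y⁆ = aVL (aVL v x) y - aVL (aVL v y) x)
    (hjac011 : ∀ (v w : V) (x : L), ⁅b v w, x⁆ = b (aVL v x) w + b v (aVL w x))
    -- admissibility: [v,v] is 2-divisible
    (half : V → L) (hhalf : ∀ v : V, (2 : k) • half v = b v v)
    -- J = U(g₀): the embedding ι of L as primitives, generating J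
    (ι : L →ₗ[k] J)
    (hιbr : ∀ u w : L, ι ⁅u, w⁆ = ι u * ι w - ι w * ι u)
    (hprim : ∀ u : L, Coalgebra.comul (R := k) (ι u) = ι u ⊗ₜ 1 + 1 ⊗ₜ ι u)
    (hgen : Algebra.adjoin k (Set.range ι) = ⊤)
    (hcocomm : ∀ a : J, (TensorProduct.comm k J J) (Coalgebra.comul (R := k) a) = Coalgebra.comul a)
    -- the right J-module structure on V extending the adjoint action
    (act : V →ₗ[k] J →ₗ[k] V)
    (hact1 : ∀ v : V, act v 1 = v)
    (hactmul : ∀ (v : V) (x y : J), act v (x * y) = act (act v x) y)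
    (hactι : ∀ (v : V) (u : L), act v (ι u) = aVL v u) :
    -- (a)
    (∀ (u v : V) (a : J),
      (ι ∘ₗ (TensorProduct.lift b) ∘ₗ (TensorProduct.map (act u) (act v)))
          (Coalgebra.comul (R := k) a) =
        (LinearMap.mul' k J)
          ((TensorProduct.map
              ((LinearMap.mulRight k (ι (b u v))) ∘ₗ HopfAlgebra.antipode (R := k))
              LinearMap.id)
            (Coalgebra.comul (R := k) a))) ∧
    -- (b)
    (∀ u v : V, b u v = b v u) ∧
    -- (c)
    (∀ v : V, act v (ι (b v v)) = 0) ∧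
    -- (d)
    (∀ u v w : V, aVL u (b v w) + aVL v (b w u) + aVL w (b u v) = 0) := by
  refine ⟨?_, hsym, ?_, ?_⟩
  · -- (a)
    intro u v a
    have key := stmt10_key b aVL hjac011 ι hιbr hprim hgen act hact1 hactmul hactι
    have hml : LinearMap.mulLeft k (ι (b u v)) =
        LinearMap.mul' k J ∘ₗ
          LinearMap.lTensor J (stmt10LM b ι act u v ∘ₗ Coalgebra.comul) ∘ₗ
          Coalgebra.comul := by
      ext q
      simp only [LinearMap.mulLeft_apply, LinearMap.comp_apply]
      exact (key q u v).symm
    have step1 : ∀ t : J ⊗[k] J,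
        LinearMap.mul' k J (TensorProduct.map
            (LinearMap.mulRight k (ι (b u v)) ∘ₗ HopfAlgebra.antipode (R := k))
            LinearMap.id t) =
          LinearMap.mul' k J (TensorProduct.map (HopfAlgebra.antipode (R := k))
            (LinearMap.mulLeft k (ι (b u v))) t) := by
      intro t
      induction t using TensorProduct.induction_on with
      | zero => simp
      | add x y hx hy => simp only [map_add, hx, hy]
      | tmul p q => simp [mul_assoc]
    have step3 : ∀ (f : J →ₗ[k] J) (t : J ⊗[k] J),
        TensorProduct.map (HopfAlgebra.antipode (R := k))
            (LinearMap.mul' k J ∘ₗ LinearMap.lTensor J f ∘ₗ Coalgebra.comul) t =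
          TensorProduct.map (HopfAlgebra.antipode (R := k))
            (LinearMap.mul' k J ∘ₗ LinearMap.lTensor J f)
            (LinearMap.lTensor J (Coalgebra.comul (R := k)) t) := by
      intro f t
      induction t using TensorProduct.induction_on with
      | zero => simp
      | add x y hx hy => simp only [map_add, hx, hy]
      | tmul p q => simp
    have step5 : ∀ (f : J →ₗ[k] J) (z : (J ⊗[k] J) ⊗[k] J),
        LinearMap.mul' k J (TensorProduct.map (HopfAlgebra.antipode (R := k))
            (LinearMap.mul' k J ∘ₗ LinearMap.lTensor J f)
            ((TensorProduct.assoc k J J J) z)) =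
          LinearMap.mul' k J (TensorProduct.map
            (LinearMap.mul' k J ∘ₗ LinearMap.rTensor J (HopfAlgebra.antipode (R := k)))
            f z) := by
      intro f z
      induction z using TensorProduct.induction_on with
      | zero => simp
      | add x y hx hy => simp only [map_add, hx, hy]
      | tmul pq r =>
        induction pq using TensorProduct.induction_on with
        | zero => simp
        | add x y hx hy => simp only [add_tmul, map_add, hx, hy]
        | tmul p q => simp [mul_assoc]
    have step6 : ∀ (f : J →ₗ[k] J) (t : J ⊗[k] J),
        LinearMap.mul' k J (TensorProduct.map
            (LinearMap.mul' k J ∘ₗ LinearMap.rTensor J (HopfAlgebra.antipode (R := k)))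
            f (LinearMap.rTensor J (Coalgebra.comul (R := k)) t)) =
          LinearMap.mul' k J (TensorProduct.map
            (LinearMap.mul' k J ∘ₗ LinearMap.rTensor J (HopfAlgebra.antipode (R := k)) ∘ₗ
              Coalgebra.comul) f t) := by
      intro f t
      induction t using TensorProduct.induction_on with
      | zero => simp
      | add x y hx hy => simp only [map_add, hx, hy]
      | tmul p q => simp
    have step8 : ∀ (f : J →ₗ[k] J) (t : J ⊗[k] J),
        LinearMap.mul' k J (TensorProduct.map
            (Algebra.linearMap k J ∘ₗ Coalgebra.counit) f t) =
          LinearMap.mul' k J (TensorProduct.map (Algebra.linearMap k J) f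
            (LinearMap.rTensor J (Coalgebra.counit (R := k)) t)) := by
      intro f t
      induction t using TensorProduct.induction_on with
      | zero => simp
      | add x y hx hy => simp only [map_add, hx, hy]
      | tmul p q => simp
    have step9 : LinearMap.rTensor J (Coalgebra.counit (R := k))
        (Coalgebra.comul (R := k) a) = (1 : k) ⊗ₜ[k] a :=
      LinearMap.congr_fun (Coalgebra.rTensor_counit_comp_comul (R := k) (A := J)) a
    symm
    calc LinearMap.mul' k J (TensorProduct.map
            (LinearMap.mulRight k (ι (b u v)) ∘ₗ HopfAlgebra.antipode (R := k))
            LinearMap.id (Coalgebra.comul a))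
        = LinearMap.mul' k J (TensorProduct.map (HopfAlgebra.antipode (R := k))
            (LinearMap.mulLeft k (ι (b u v))) (Coalgebra.comul a)) := step1 _
      _ = LinearMap.mul' k J (TensorProduct.map (HopfAlgebra.antipode (R := k))
            (LinearMap.mul' k J ∘ₗ
              LinearMap.lTensor J (stmt10LM b ι act u v ∘ₗ Coalgebra.comul) ∘ₗ
              Coalgebra.comul) (Coalgebra.comul a)) := by rw [hml]
      _ = LinearMap.mul' k J (TensorProduct.map (HopfAlgebra.antipode (R := k))
            (LinearMap.mul' k J ∘ₗ
              LinearMap.lTensor J (stmt10LM b ι act u v ∘ₗ Coalgebra.comul))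
            (LinearMap.lTensor J (Coalgebra.comul (R := k)) (Coalgebra.comul a))) := by
          rw [step3]
      _ = LinearMap.mul' k J (TensorProduct.map (HopfAlgebra.antipode (R := k))
            (LinearMap.mul' k J ∘ₗ
              LinearMap.lTensor J (stmt10LM b ι act u v ∘ₗ Coalgebra.comul))
            ((TensorProduct.assoc k J J J)
              (LinearMap.rTensor J (Coalgebra.comul (R := k)) (Coalgebra.comul a)))) := by
          rw [Coalgebra.coassoc_apply]
      _ = LinearMap.mul' k J (TensorProduct.map
            (LinearMap.mul' k J ∘ₗ LinearMap.rTensor J (HopfAlgebra.antipode (R := k)))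
            (stmt10LM b ι act u v ∘ₗ Coalgebra.comul)
            (LinearMap.rTensor J (Coalgebra.comul (R := k)) (Coalgebra.comul a))) :=
          step5 _ _
      _ = LinearMap.mul' k J (TensorProduct.map
            (LinearMap.mul' k J ∘ₗ LinearMap.rTensor J (HopfAlgebra.antipode (R := k)) ∘ₗ
              Coalgebra.comul)
            (stmt10LM b ι act u v ∘ₗ Coalgebra.comul) (Coalgebra.comul a)) := step6 _ _
      _ = LinearMap.mul' k J (TensorProduct.map
            (Algebra.linearMap k J ∘ₗ Coalgebra.counit)
            (stmt10LM b ι act u v ∘ₗ Coalgebra.comul) (Coalgebra.comul a)) := by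
          rw [HopfAlgebra.mul_antipode_rTensor_comul]
      _ = LinearMap.mul' k J (TensorProduct.map (Algebra.linearMap k J)
            (stmt10LM b ι act u v ∘ₗ Coalgebra.comul)
            (LinearMap.rTensor J (Coalgebra.counit (R := k)) (Coalgebra.comul a))) :=
          step8 _ _
      _ = LinearMap.mul' k J (TensorProduct.map (Algebra.linearMap k J)
            (stmt10LM b ι act u v ∘ₗ Coalgebra.comul) ((1 : k) ⊗ₜ[k] a)) := by
          rw [step9]
      _ = (stmt10LM b ι act u v) (Coalgebra.comul a) := by simp
      _ = (ι ∘ₗ (TensorProduct.lift b) ∘ₗ (TensorProduct.map (act u) (act v)))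
            (Coalgebra.comul a) := rfl
  · -- (c)
    intro v
    rw [hactι]
    exact hodd3 v
  · -- (d)
    intro u v w
    apply h2V
    rw [two_smul]
    have h1 := hodd3 (u + v + w)
    have h2 := hodd3 (u + v)
    have h3 := hodd3 (v + w)
    have h4 := hodd3 (u + w)
    have h5 := hodd3 u
    have h6 := hodd3 v
    have h7 := hodd3 w
    simp only [map_add, LinearMap.add_apply, ← hsym u v, ← hsym u w, ← hsym v w]
      at h1 h2 h3 h4
    rw [← hsym u w]
    linear_combination (norm := abel) h1 - h2 - h3 - h4 + h5 + h6 + h7
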